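/- Let K be a field, n > 1, and a ∈ K[s]^n a nonzero row vector. Then the syzygy module syz(a) is a free K[s]-module of rank n − 1; moreover, there exist n − 1 elements u_1,...,u_{n-1} of syz(a) that form a basis of syz(a) as a K[s]-module and whose leading vectors LV(u_1),...,LV(u_{n-1}) are linearly independent over K (i.e., a μ-basis of a exists). -/

import Mathlib

open Polynomial
open scoped Classical

noncomputable section

/-- The degree of a polynomial vector: the maximum of the degrees of the entries. -/
def vdeg {K : Type*} [Field K] {n : ℕ} (h : Fin n → K[X]) : ℕ :=
  Finset.univ.sup fun i => (h i).natDegree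

/-- The leading vector of a polynomial vector: the vector of coefficients of
`s ^ (vdeg h)` in the entries. -/
def LV {K : Type*} [Field K] {n : ℕ} (h : Fin n → K[X]) : Fin n → K :=
  fun i => (h i).coeff (vdeg h)

/-- The syzygy module of a row vector `a` of polynomials. -/
def syz {K : Type*} [Field K] {n : ℕ} (a : Fin n → K[X]) :
    Submodule K[X] (Fin n → K[X]) where
  carrier := {h | ∑ i, a i * h i = 0}
  add_mem' := by
    intro x y hx hy
    simp only [Set.mem_setOf_eq] at *
    simp only [Pi.add_apply, mul_add, Finset.sum_add_distrib, hx, hy, add_zero]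
  zero_mem' := by simp
  smul_mem' := by
    intro c x hx
    simp only [Set.mem_setOf_eq] at *
    have h1 : ∑ i, a i * (c • x) i = c * ∑ i, a i * x i := by
      rw [Finset.mul_sum]
      refine Finset.sum_congr rfl fun i _ => ?_
      simp only [Pi.smul_apply, smul_eq_mul]
      ring
    rw [h1, hx, mul_zero]

/-- The coefficient matrix `A ∈ K^{(2d+1) × n(d+1)}` associated with a polynomial row
vector `a` of degree at most `d`:  `A_{k+1, i+jn} = c_{k-j,i}` where `c_m` is the vector of
coefficients of `s^m` in `a` (with `c_m = 0` for `m < 0` or `m > d`). -/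
def coefA {K : Type*} [Field K] {n : ℕ} (d : ℕ) (hn : 0 < n) (a : Fin n → K[X]) :
    Matrix (Fin (2*d+1)) (Fin (n*(d+1))) K :=
  Matrix.of fun k ℓ =>
    if (ℓ : ℕ) / n ≤ (k : ℕ) then
      (a ⟨(ℓ : ℕ) % n, Nat.mod_lt _ hn⟩).coeff ((k : ℕ) - (ℓ : ℕ) / n)
    else 0

/-- The `♭` isomorphism `K^{n(d+1)} → K[s]^n`: split `v` into `d+1` consecutive blocks
`w_0, …, w_d ∈ K^n` and form `∑_j s^j w_j`. -/
def flatv {K : Type*} [Field K] {n : ℕ} (d : ℕ) (v : Fin (n*(d+1)) → K) : Fin n → K[X] :=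
  fun i => ∑ j : Fin (d+1), C (v ⟨(i:ℕ) + (j:ℕ)*n, by
    calc (i:ℕ) + (j:ℕ)*n < n + (j:ℕ)*n := Nat.add_lt_add_right i.isLt _
      _ = n * ((j:ℕ)+1) := by ring
      _ ≤ n * (d+1) := Nat.mul_le_mul le_rfl j.isLt⟩) * X ^ (j:ℕ)

/-- The `♭` isomorphism `K^m → K[s]` for scalars. -/
def flat1 {K : Type*} [Field K] {m : ℕ} (w : Fin m → K) : K[X] :=
  ∑ k : Fin m, C (w k) * X ^ (k:ℕ)

/-- A column index `j` of a matrix is pivotal if the `j`-th column is not a `K`-linear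
combination of the columns of smaller index. -/
def Pivotal {K : Type*} [Field K] {m N : ℕ} (A : Matrix (Fin m) (Fin N) K) (j : Fin N) : Prop :=
  (fun k => A k j) ∉ Submodule.span K ((fun r : Fin N => fun k => A k r) '' {r | r < j})

/-- A basic non-pivotal index: the minimal non-pivotal index in its residue class modulo `n`. -/
def BasicNP {K : Type*} [Field K] {m N : ℕ} (n : ℕ) (A : Matrix (Fin m) (Fin N) K)
    (r : Fin N) : Prop :=
  ¬ Pivotal A r ∧ ∀ r' : Fin N, ¬ Pivotal A r' → (r':ℕ) % n = (r:ℕ) % n → r ≤ r'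

/-- `B` encodes, for each non-pivotal index `i`, the row-echelon null vector
`b_i = e_i − v_i`: `(b_i)_i = 1`, `(b_i)_j = −α_j` for pivotal `j < i` where
`A_{*i} = Σ α_j A_{*j}`, and all other entries vanish.  Equivalently, `b_i ∈ ker A`,
`(b_i)_i = 1` and `(b_i)_j = 0` unless `j = i` or `j` is pivotal with `j < i`. -/
def IsEchelonNull {K : Type*} [Field K] {m N : ℕ} (A : Matrix (Fin m) (Fin N) K)
    (B : Fin N → Fin N → K) : Prop :=
  ∀ i : Fin N, ¬ Pivotal A i →
    A.mulVec (B i) = 0 ∧ B i i = 1 ∧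
    ∀ j : Fin N, j ≠ i → ¬ (Pivotal A j ∧ j < i) → B i j = 0

/-- Shift an index by `t`, modulo the size (used only when `j + t` is in range). -/
def shiftIdx {N : ℕ} (j : Fin N) (t : ℕ) : Fin N :=
  ⟨((j:ℕ) + t) % N, Nat.mod_lt _ j.pos⟩
section Aux

variable {K : Type*} [Field K] {n : ℕ}

/-- The linear map `h ↦ ∑ i, a i * h i`. -/
def sumMap (a : Fin n → K[X]) : (Fin n → K[X]) →ₗ[K[X]] K[X] where
  toFun h := ∑ i, a i * h i
  map_add' x y := by simp [mul_add, Finset.sum_add_distrib]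
  map_smul' c x := by
    simp only [RingHom.id_apply, Pi.smul_apply, smul_eq_mul, Finset.mul_sum]
    exact Finset.sum_congr rfl fun i _ => by ring

lemma mem_syz_iff {a : Fin n → K[X]} {h : Fin n → K[X]} :
    h ∈ syz a ↔ ∑ i, a i * h i = 0 := Iff.rfl

lemma syz_eq_ker (a : Fin n → K[X]) : syz a = LinearMap.ker (sumMap a) := by
  ext h
  simp [mem_syz_iff, LinearMap.mem_ker, sumMap]

lemma card_basis_syz (a : Fin n → K[X]) (ha : a ≠ 0) {m : ℕ}
    (b : Module.Basis (Fin m) K[X] ↥(syz a)) : m + 1 = n := by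
  classical
  set φ := sumMap a with hφ
  -- the range of φ is a nonzero principal ideal
  obtain ⟨i, hi⟩ := Function.ne_iff.mp ha
  have hmem_ai : a i ∈ LinearMap.range φ := by
    refine ⟨Pi.single i 1, ?_⟩
    simp [hφ, sumMap, Pi.single_apply, mul_ite, Finset.sum_ite_eq']
  set g := Submodule.IsPrincipal.generator (LinearMap.range φ) with hg
  have hspan : Submodule.span K[X] {g} = LinearMap.range φ :=
    Submodule.IsPrincipal.span_singleton_generator _
  have hg0 : g ≠ 0 := by
    intro h0
    rw [h0] at hspan
    simp only [Submodule.span_zero_singleton] at hspan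
    rw [← hspan] at hmem_ai
    simp only [Submodule.mem_bot] at hmem_ai
    exact hi (by simpa using hmem_ai)
  obtain ⟨x₀, hx₀⟩ : g ∈ LinearMap.range φ :=
    Submodule.IsPrincipal.generator_mem _
  -- the splitting map
  set f : (↥(syz a) × K[X]) →ₗ[K[X]] (Fin n → K[X]) :=
    LinearMap.coprod (syz a).subtype (LinearMap.toSpanSingleton K[X] _ x₀) with hf
  have hfapp : ∀ (k : ↥(syz a)) (p : K[X]), f (k, p) = (k : Fin n → K[X]) + p • x₀ := by
    intro k p; simp [hf]
  have hφk : ∀ k : ↥(syz a), φ (k : Fin n → K[X]) = 0 := by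
    intro k
    have hk2 : ((k : Fin n → K[X])) ∈ syz a := k.2
    rw [mem_syz_iff] at hk2
    simp only [hφ, sumMap, LinearMap.coe_mk, AddHom.coe_mk]
    exact hk2
  have hinj : Function.Injective f := by
    rw [← LinearMap.ker_eq_bot, LinearMap.ker_eq_bot']
    rintro ⟨k, p⟩ hz
    rw [hfapp] at hz
    have h1 : φ ((k : Fin n → K[X]) + p • x₀) = 0 := by rw [hz]; simp
    rw [map_add, map_smul, hφk, hx₀, zero_add, smul_eq_mul] at h1
    have hp : p = 0 := by
      rcases mul_eq_zero.mp h1 with h | h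
      · exact h
      · exact absurd h hg0
    subst hp
    have hk : (k : Fin n → K[X]) = 0 := by
      simpa using hz
    exact Prod.ext (Subtype.ext hk) rfl
  have hsurj : Function.Surjective f := by
    intro y
    have hy : φ y ∈ Submodule.span K[X] {g} := by rw [hspan]; exact ⟨y, rfl⟩
    obtain ⟨p, hp⟩ := Submodule.mem_span_singleton.mp hy
    have hk : y - p • x₀ ∈ syz a := by
      rw [syz_eq_ker]
      simp only [LinearMap.mem_ker, map_sub, map_smul, hx₀]
      rw [smul_eq_mul] at hp
      rw [← hp]
      simp [smul_eq_mul]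
      rw [← hφ, hx₀, sub_self]
    refine ⟨(⟨y - p • x₀, hk⟩, p), ?_⟩
    rw [hfapp]
    show y - p • x₀ + p • x₀ = y
    abel
  have e : (↥(syz a) × K[X]) ≃ₗ[K[X]] (Fin n → K[X]) :=
    LinearEquiv.ofBijective f ⟨hinj, hsurj⟩
  haveI : Module.Free K[X] ↥(syz a) := Module.Free.of_basis b
  have h1 : Module.rank K[X] (↥(syz a) × K[X]) = Module.rank K[X] (Fin n → K[X]) :=
    e.rank_eq
  rw [rank_prod', Module.rank_self, rank_eq_card_basis b,
    rank_eq_card_basis (Pi.basisFun K[X] (Fin n))] at h1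
  have h2 : ((m + 1 : ℕ) : Cardinal) = ((n : ℕ) : Cardinal) := by
    push_cast
    simpa using h1
  exact Nat.cast_injective h2

/-- The degree-reduction step: if the leading vectors of a linearly independent
family of syzygies are `K`-linearly dependent, then we can replace one member to
strictly decrease the total degree while keeping the span and independence. -/
lemma lv_reduce (a : Fin n → K[X]) {m : ℕ} (u : Fin m → Fin n → K[X])
    (hmem : ∀ i, u i ∈ syz a) (hli : LinearIndependent K[X] u)
    (hdep : ¬ LinearIndependent K (fun i => LV (u i))) :
    ∃ u' : Fin m → Fin n → K[X], (∀ i, u' i ∈ syz a) ∧ LinearIndependent K[X] u' ∧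
      Submodule.span K[X] (Set.range u') = Submodule.span K[X] (Set.range u) ∧
      ∑ i, vdeg (u' i) < ∑ i, vdeg (u i) := by
  classical
  obtain ⟨c, hc0, i₁, hci₁⟩ := Fintype.not_linearIndependent_iff.mp hdep
  set S : Finset (Fin m) := Finset.univ.filter (fun i => c i ≠ 0) with hSdef
  have hS : S.Nonempty := ⟨i₁, Finset.mem_filter.mpr ⟨Finset.mem_univ i₁, hci₁⟩⟩
  set d : ℕ := S.sup (fun i => vdeg (u i)) with hd
  obtain ⟨i₀, hi₀S, hi₀d⟩ := Finset.exists_mem_eq_sup S hS (fun i => vdeg (u i))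
  have hdeq : vdeg (u i₀) = d := by rw [hd, ← hi₀d]
  have hci₀ : c i₀ ≠ 0 := by
    have := hi₀S; rw [hSdef, Finset.mem_filter] at this; exact this.2
  have hvile : ∀ i, c i ≠ 0 → vdeg (u i) ≤ d :=
    fun i h => by
      rw [hd]
      exact Finset.le_sup (f := fun i => vdeg (u i))
        (show i ∈ S from Finset.mem_filter.mpr ⟨Finset.mem_univ i, h⟩)
  set w : Fin m → K[X] := fun i => C (c i) * X ^ (d - vdeg (u i)) with hw
  set v : Fin n → K[X] := ∑ i, w i • u i with hv
  have hvj : ∀ j, v j = ∑ i, w i * u i j := by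
    intro j; rw [hv]; simp [Finset.sum_apply]
  -- the coefficient of `X^k`, `k ≥ d`, in each term
  have hterm : ∀ (i : Fin m) (j : Fin n) (k : ℕ), d ≤ k →
      (w i * u i j).coeff k = if k = d then c i * LV (u i) j else 0 := by
    intro i j k hk
    by_cases hci : c i = 0
    · simp [hw, hci, LV]
    · have hvi : vdeg (u i) ≤ d := hvile i hci
      have h1 : w i * u i j = C (c i) * (u i j * X ^ (d - vdeg (u i))) := by
        rw [hw]; ring
      rw [h1, coeff_C_mul, coeff_mul_X_pow', if_pos (le_trans (Nat.sub_le _ _) hk)]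
      by_cases hkd : k = d
      · rw [if_pos hkd]
        have he : k - (d - vdeg (u i)) = vdeg (u i) := by omega
        rw [he]
        rfl
      · have hlt : d < k := lt_of_le_of_ne hk (Ne.symm hkd)
        rw [if_neg hkd]
        have hnd : (u i j).natDegree ≤ vdeg (u i) := by
          rw [vdeg]
          exact Finset.le_sup (f := fun j => (u i j).natDegree) (Finset.mem_univ j)
        have hlt2 : (u i j).natDegree < k - (d - vdeg (u i)) := by omega
        rw [coeff_eq_zero_of_natDegree_lt hlt2, mul_zero]
  have hvcoeff : ∀ (j : Fin n) (k : ℕ), d ≤ k → (v j).coeff k = 0 := by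
    intro j k hk
    rw [hvj, finset_sum_coeff]
    by_cases hkd : k = d
    · have heq : ∑ i, (w i * u i j).coeff k = ∑ i, c i * LV (u i) j := by
        refine Finset.sum_congr rfl fun i _ => ?_
        rw [hterm i j k hk, if_pos hkd]
      rw [heq]
      have := congrFun hc0 j
      simpa [Finset.sum_apply] using this
    · refine Finset.sum_eq_zero fun i _ => ?_
      rw [hterm i j k hk, if_neg hkd]
  -- `v ≠ 0` by linear independence
  have hw0 : w i₀ = C (c i₀) := by
    have he : d - vdeg (u i₀) = 0 := by omega
    simp only [hw, he, pow_zero, mul_one]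
  have hvne : v ≠ 0 := by
    intro h0
    have := Fintype.linearIndependent_iff.mp hli w (by rw [← hv, h0]) i₀
    rw [hw0] at this
    exact hci₀ (by simpa using this)
  have hd0 : 0 < d := by
    by_contra hdz
    push_neg at hdz
    interval_cases d
    exact hvne (funext fun j => Polynomial.ext fun k => by
      simpa using hvcoeff j k (Nat.zero_le k))
  have hvdeg : vdeg v < d := by
    rw [vdeg]
    rw [Finset.sup_lt_iff (show (⊥ : ℕ) < d from hd0)]
    intro j _
    rcases eq_or_ne (v j) 0 with h | h
    · simpa [h] using hd0
    · by_contra hge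
      push_neg at hge
      exact (mt Polynomial.leadingCoeff_eq_zero.mp h)
        (hvcoeff j (v j).natDegree hge)
  set u' : Fin m → Fin n → K[X] := Function.update u i₀ v with hu'
  have hu'i : ∀ i, i ≠ i₀ → u' i = u i := fun i hi => Function.update_of_ne hi _ _
  have hu'i₀ : u' i₀ = v := Function.update_self _ _ _
  have hvmem : v ∈ syz a := by
    rw [hv]
    exact Submodule.sum_mem _ fun i _ => Submodule.smul_mem _ _ (hmem i)
  have hmem' : ∀ i, u' i ∈ syz a := by
    intro i
    by_cases hi : i = i₀
    · rw [hi, hu'i₀]; exact hvmem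
    · rw [hu'i i hi]; exact hmem i
  -- key sum identity for independence / span
  have hsplit : v = w i₀ • u i₀ + ∑ i ∈ Finset.univ.erase i₀, w i • u i := by
    rw [hv, ← Finset.add_sum_erase _ _ (Finset.mem_univ i₀)]
  have hspan' : Submodule.span K[X] (Set.range u') = Submodule.span K[X] (Set.range u) := by
    apply le_antisymm
    · rw [Submodule.span_le]
      rintro _ ⟨i, rfl⟩
      by_cases hi : i = i₀
      · rw [hi, hu'i₀, hv]
        exact Submodule.sum_mem _ fun i _ =>
          Submodule.smul_mem _ _ (Submodule.subset_span (Set.mem_range_self i))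
      · rw [hu'i i hi]
        exact Submodule.subset_span (Set.mem_range_self i)
    · rw [Submodule.span_le]
      rintro _ ⟨i, rfl⟩
      by_cases hi : i = i₀
      · rw [hi]
        -- recover `u i₀` from `v` and the other `u i`
        have hkey : u i₀ = C (c i₀)⁻¹ • (v - ∑ i ∈ Finset.univ.erase i₀, w i • u i) := by
          rw [hsplit, hw0, add_sub_cancel_right, ← mul_smul, ← C_mul,
            inv_mul_cancel₀ hci₀, C_1, one_smul]
        rw [hkey]
        refine Submodule.smul_mem _ _ (Submodule.sub_mem _ ?_ ?_)
        · rw [← hu'i₀]; exact Submodule.subset_span (Set.mem_range_self i₀)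
        · refine Submodule.sum_mem _ fun i hi => Submodule.smul_mem _ _ ?_
          rw [← hu'i i (Finset.ne_of_mem_erase hi)]
          exact Submodule.subset_span (Set.mem_range_self i)
      · rw [← hu'i i hi]
        exact Submodule.subset_span (Set.mem_range_self i)
  have hli' : LinearIndependent K[X] u' := by
    refine Fintype.linearIndependent_iff.mpr ?_
    intro g hg
    set g' : Fin m → K[X] :=
      fun i => if i = i₀ then g i₀ * C (c i₀) else g i + g i₀ * w i with hg'
    have hgsum : ∑ i, g' i • u i = 0 := by
      rw [← Finset.add_sum_erase _ (fun i => g' i • u i) (Finset.mem_univ i₀)]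
      have h1 : g' i₀ = g i₀ * C (c i₀) := by rw [hg']; simp
      have h2 : ∀ i ∈ Finset.univ.erase i₀, g' i • u i = g i • u i + (g i₀ * w i) • u i := by
        intro i hi
        simp only [hg']
        rw [if_neg (Finset.ne_of_mem_erase hi), add_smul]
      rw [h1, Finset.sum_congr rfl h2, Finset.sum_add_distrib]
      have h3 : (g i₀ * C (c i₀)) • u i₀ + (∑ i ∈ Finset.univ.erase i₀, g i • u i
          + ∑ i ∈ Finset.univ.erase i₀, (g i₀ * w i) • u i)
          = (∑ i ∈ Finset.univ.erase i₀, g i • u i) + g i₀ • v := by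
        rw [hsplit, hw0, smul_add, Finset.smul_sum]
        simp only [← mul_smul]
        abel
      rw [h3]
      have h4 : (∑ i ∈ Finset.univ.erase i₀, g i • u i) + g i₀ • v
          = ∑ i, g i • u' i := by
        rw [← Finset.add_sum_erase _ (fun i => g i • u' i) (Finset.mem_univ i₀), hu'i₀]
        have hcong : (∑ i ∈ Finset.univ.erase i₀, g i • u' i)
            = ∑ i ∈ Finset.univ.erase i₀, g i • u i :=
          Finset.sum_congr rfl fun i hi => by rw [hu'i i (Finset.ne_of_mem_erase hi)]
        rw [hcong]
        abel
      rw [h4, hg]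
    have hall := Fintype.linearIndependent_iff.mp hli g' hgsum
    have hgi₀ : g i₀ = 0 := by
      have := hall i₀
      simp only [hg', reduceIte] at this
      rcases mul_eq_zero.mp this with h | h
      · exact h
      · exact absurd (by simpa using h) hci₀
    intro i
    by_cases hi : i = i₀
    · rw [hi]; exact hgi₀
    · have := hall i
      simp only [hg'] at this
      rw [if_neg hi, hgi₀, zero_mul, add_zero] at this
      exact this
  refine ⟨u', hmem', hli', hspan', ?_⟩
  refine Finset.sum_lt_sum (fun i _ => ?_) ⟨i₀, Finset.mem_univ i₀, ?_⟩
  · by_cases hi : i = i₀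
    · rw [hi, hu'i₀]
      exact le_of_lt (lt_of_lt_of_le hvdeg (le_of_eq hdeq.symm))
    · rw [hu'i i hi]
  · rw [hu'i₀]
    exact lt_of_lt_of_le hvdeg (le_of_eq hdeq.symm)

/-- Iterating the reduction: any spanning linearly independent family of syzygies can be
converted into one whose leading vectors are `K`-linearly independent. -/
lemma exists_muBasis_of_basis (a : Fin n → K[X]) {m : ℕ} :
    ∀ (N : ℕ) (u : Fin m → Fin n → K[X]), (∑ i, vdeg (u i)) ≤ N →
      (∀ i, u i ∈ syz a) → LinearIndependent K[X] u →
      Submodule.span K[X] (Set.range u) = syz a →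
      ∃ u' : Fin m → Fin n → K[X], (∀ i, u' i ∈ syz a) ∧ LinearIndependent K[X] u' ∧
        Submodule.span K[X] (Set.range u') = syz a ∧
        LinearIndependent K (fun i => LV (u' i)) := by
  intro N
  induction N using Nat.strong_induction_on with
  | _ N ih =>
    intro u hN hmem hli hspan
    by_cases hlv : LinearIndependent K (fun i => LV (u i))
    · exact ⟨u, hmem, hli, hspan, hlv⟩
    · obtain ⟨u', hmem', hli', hspan', hlt⟩ := lv_reduce a u hmem hli hlv
      exact ih (∑ i, vdeg (u' i)) (lt_of_lt_of_le hlt hN) u' le_rfl hmem' hli'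
        (hspan'.trans hspan)

end Aux

/-- existence of a μ-basis; freeness of the syzygy module.
For a nonzero row vector `a ∈ K[s]^n` with `n > 1`, the syzygy module `syz a` is a free
`K[s]`-module of rank `n − 1`; moreover there exist `n − 1` syzygies `u_1, …, u_{n-1}`
that form a basis of `syz a` over `K[s]` and whose leading vectors are linearly
independent over `K` (i.e. a μ-basis exists). -/
theorem mu_basis_exists {K : Type*} [Field K] {n : ℕ} (hn : 1 < n)
    (a : Fin n → K[X]) (ha : a ≠ 0) :
    Module.Free K[X] ↥(syz a) ∧
    Module.rank K[X] ↥(syz a) = ((n - 1 : ℕ) : Cardinal) ∧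
    ∃ u : Fin (n-1) → Fin n → K[X],
      (∀ i, u i ∈ syz a) ∧
      LinearIndependent K[X] u ∧
      Submodule.span K[X] (Set.range u) = syz a ∧
      LinearIndependent K (fun i => LV (u i)) := by
  classical
  obtain ⟨m, b⟩ := Submodule.basisOfPid (Pi.basisFun K[X] (Fin n)) (syz a)
  have hcard : m + 1 = n := card_basis_syz a ha b
  have hm : m = n - 1 := by omega
  subst hm
  haveI hfree : Module.Free K[X] ↥(syz a) := Module.Free.of_basis b
  have hrank : Module.rank K[X] ↥(syz a) = ((n - 1 : ℕ) : Cardinal) := by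
    rw [rank_eq_card_basis b]
    simp
  refine ⟨hfree, hrank, ?_⟩
  set u0 : Fin (n-1) → Fin n → K[X] := fun i => (b i : Fin n → K[X]) with hu0
  have hmem0 : ∀ i, u0 i ∈ syz a := fun i => (b i).2
  have hli0 : LinearIndependent K[X] u0 := by
    have := b.linearIndependent
    exact this.map' (syz a).subtype (Submodule.ker_subtype _)
  have hspan0 : Submodule.span K[X] (Set.range u0) = syz a := by
    have h1 : Set.range u0 = (syz a).subtype '' Set.range b := by
      rw [hu0, ← Set.range_comp]
      rfl
    rw [h1, ← Submodule.map_span, b.span_eq, Submodule.map_subtype_top]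
  obtain ⟨u, hmem, hli, hspan, hlv⟩ :=
    exists_muBasis_of_basis a (∑ i, vdeg (u0 i)) u0 le_rfl hmem0 hli0 hspan0
  exact ⟨u, hmem, hli, hspan, hlv⟩
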